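/- Let r ≥ 0 and k ≥ r be integers, let n ≥ 0 and f1 ≥ 0 be integers, and let t_1, …, t_n be integers with t_i ≥ 2 for every i; set Ω_i = Ω(t_i,r), a_i = a(t_i,r), b_i = b(t_i,r). Then, as integers, C(k+2,2) + f1·C(k+2−(r+1),2) − Σ_{i=1}^{n} [ t_i·C(k+2−(r+1),2) − b_i·C(k+2−Ω_i,2) − a_i·C(k+2−(Ω_i+1),2) ] = C(k+2,2) + f1·C(k+2−(r+1),2) − n·[ C(k+2,2) − C(r+2,2) ] + Σ_{i=1}^{n} Σ_{j=1}^{k−r} max(r + j + 1 − j·t_i, 0). (Equivalently: the homological lower bound formula for dim C_k^r(Δ) coincides with Schumaker's lower bound formula, for any combinatorial data f1 and t_1,…,t_n.) -/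

import Mathlib

/-- `Ω t r = ⌊t·r/(t-1)⌋ + 1`, the floor taken in `ℚ`. -/
noncomputable def Omega (t r : ℤ) : ℤ := ⌊(t * r : ℚ) / ((t : ℚ) - 1)⌋ + 1

/-- `a t r = t·(r+1) + (1−t)·Ω(t,r)`. -/
noncomputable def aa (t r : ℤ) : ℤ := t * (r + 1) + (1 - t) * Omega t r

/-- `b t r = t − 1 − a(t,r)`. -/
noncomputable def bb (t r : ℤ) : ℤ := t - 1 - aa t r

/-- `C2 m = C(m, 2)`, with the convention that it is `0` for `m < 2`
(truncation via `Int.toNat`). -/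
def C2 (m : ℤ) : ℤ := ((m.toNat).choose 2 : ℤ)

lemma C2_eq_zero {m : ℤ} (h : m ≤ 1) : C2 m = 0 := by
  unfold C2
  rw [Nat.choose_eq_zero_of_lt (by omega)]
  rfl

lemma C2_succ (m : ℤ) : C2 (m + 1) = C2 m + max m 0 := by
  rcases le_or_gt m 0 with h | h
  · rw [C2_eq_zero (by omega), C2_eq_zero (by omega), max_eq_right h]; ring
  · have h1 : (m + 1).toNat = m.toNat + 1 := by omega
    unfold C2
    rw [h1, Nat.choose_succ_succ, Nat.choose_one_right, max_eq_left h.le]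
    have h2 : (m.toNat : ℤ) = m := by omega
    push_cast
    omega

lemma Omega_eq (t r : ℤ) (ht : 2 ≤ t) (hr : 0 ≤ r) :
    Omega t r = r + r / (t - 1) + 1 := by
  unfold Omega
  have hd : ((t - 1).toNat : ℤ) = t - 1 := by omega
  have h1 : ((t : ℚ) - 1) = (((t - 1).toNat : ℕ) : ℚ) := by exact_mod_cast hd.symm
  have h2 : ((t : ℚ) * r) = (((t * r : ℤ) : ℚ)) := by push_cast; ring
  rw [h1, h2, Rat.floor_intCast_div_natCast, hd]
  have h3 : t * r = r + r * (t - 1) := by ring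
  rw [h3, Int.add_mul_ediv_right _ _ (by omega : t - 1 ≠ 0)]
  ring

lemma sum_Icc_top {a b : ℤ} (h : a ≤ b + 1) (f : ℤ → ℤ) :
    ∑ j ∈ Finset.Icc a (b + 1), f j = (∑ j ∈ Finset.Icc a b, f j) + f (b + 1) := by
  have hins : Finset.Icc a (b + 1) = insert (b + 1) (Finset.Icc a b) := by
    ext x; simp only [Finset.mem_Icc, Finset.mem_insert]; omega
  rw [hins, Finset.sum_insert (by simp only [Finset.mem_Icc]; omega)]
  ring

lemma key (t r : ℤ) (ht : 2 ≤ t) (hr : 0 ≤ r) (k : ℤ) (hk : r ≤ k) :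
    t * C2 (k + 2 - (r + 1)) - bb t r * C2 (k + 2 - Omega t r)
      - aa t r * C2 (k + 2 - (Omega t r + 1))
    = C2 (k + 2) - C2 (r + 2) - ∑ j ∈ Finset.Icc (1 : ℤ) (k - r), max (r + j + 1 - j * t) 0 := by
  set q : ℤ := r / (t - 1) with hqdef
  have hmod1 : 0 ≤ r % (t - 1) := Int.emod_nonneg r (by omega)
  have hmod2 : r % (t - 1) < t - 1 := Int.emod_lt_of_pos r (by omega)
  have hde : (t - 1) * q + r % (t - 1) = r := Int.mul_ediv_add_emod r (t - 1)
  have hq0 : 0 ≤ q := Int.ediv_nonneg hr (by omega)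
  have hql : q * (t - 1) ≤ r := by nlinarith
  have hqu : r < (q + 1) * (t - 1) := by nlinarith
  have hΩ : Omega t r = r + q + 1 := Omega_eq t r ht hr
  have ha : aa t r = r + 1 - q * (t - 1) := by
    unfold aa; rw [hΩ]; ring
  have hb : bb t r = t - 1 - (r + 1 - q * (t - 1)) := by
    unfold bb; rw [ha]
  have harith : ∀ m : ℤ, 1 ≤ m →
      t * max m 0 - (t - 1 - (r + 1 - q * (t - 1))) * max (m - q) 0
        - (r + 1 - q * (t - 1)) * max (m - q - 1) 0
      = (m + r + 1) - max (r + 1 - m * (t - 1)) 0 := by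
    intro m hm
    rcases le_or_gt m q with hc | hc
    · have hmul : m * (t - 1) ≤ q * (t - 1) :=
        mul_le_mul_of_nonneg_right hc (by omega)
      rw [max_eq_left (by omega : (0:ℤ) ≤ m),
          max_eq_right (by omega : m - q ≤ 0),
          max_eq_right (by omega : m - q - 1 ≤ 0),
          max_eq_left (by linarith : (0:ℤ) ≤ r + 1 - m * (t - 1))]
      ring
    · rcases le_or_gt m (q + 1) with hc2 | hc2
      · have hm' : m = q + 1 := by omega
        subst hm'
        rw [max_eq_left (by omega : (0:ℤ) ≤ q + 1),
            max_eq_left (by omega : (0:ℤ) ≤ q + 1 - q),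
            max_eq_right (by omega : q + 1 - q - 1 ≤ 0),
            max_eq_right (by linarith : r + 1 - (q + 1) * (t - 1) ≤ 0)]
        ring
      · have hmul : (q + 1) * (t - 1) ≤ m * (t - 1) :=
          mul_le_mul_of_nonneg_right (by omega) (by omega)
        rw [max_eq_left (by omega : (0:ℤ) ≤ m),
            max_eq_left (by omega : (0:ℤ) ≤ m - q),
            max_eq_left (by omega : (0:ℤ) ≤ m - q - 1),
            max_eq_right (by linarith : r + 1 - m * (t - 1) ≤ 0)]
        ring
  refine Int.le_induction (motive := fun k _ =>
      t * C2 (k + 2 - (r + 1)) - bb t r * C2 (k + 2 - Omega t r)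
        - aa t r * C2 (k + 2 - (Omega t r + 1))
      = C2 (k + 2) - C2 (r + 2)
        - ∑ j ∈ Finset.Icc (1 : ℤ) (k - r), max (r + j + 1 - j * t) 0) ?_ ?_ k hk
  · show t * C2 (r + 2 - (r + 1)) - bb t r * C2 (r + 2 - Omega t r)
        - aa t r * C2 (r + 2 - (Omega t r + 1))
      = C2 (r + 2) - C2 (r + 2) - ∑ j ∈ Finset.Icc (1 : ℤ) (r - r), max (r + j + 1 - j * t) 0
    rw [C2_eq_zero (by omega : r + 2 - (r + 1) ≤ 1),
        C2_eq_zero (by rw [hΩ]; omega : r + 2 - Omega t r ≤ 1),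
        C2_eq_zero (by rw [hΩ]; omega : r + 2 - (Omega t r + 1) ≤ 1),
        Finset.Icc_eq_empty (by omega : ¬ (1 : ℤ) ≤ r - r)]
    simp
  · intro k hk ih
    have e1 : k + 1 + 2 - (r + 1) = (k + 2 - (r + 1)) + 1 := by ring
    have e2 : k + 1 + 2 - Omega t r = (k + 2 - Omega t r) + 1 := by ring
    have e3 : k + 1 + 2 - (Omega t r + 1) = (k + 2 - (Omega t r + 1)) + 1 := by ring
    have e4 : k + 1 + 2 = (k + 2) + 1 := by ring
    have e5 : k + 1 - r = (k - r) + 1 := by ring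
    rw [e1, e2, e3, e4, C2_succ, C2_succ, C2_succ, C2_succ, e5,
        sum_Icc_top (by omega : (1:ℤ) ≤ k - r + 1)]
    have hstep := harith (k + 1 - r) (by omega)
    rw [hΩ, ha, hb,
        (by ring : k + 2 - (r + 1) = k + 1 - r),
        (by ring : k + 2 - (r + q + 1) = k + 1 - r - q),
        (by ring : k + 2 - (r + q + 1 + 1) = k + 1 - r - q - 1)] at ih ⊢
    rw [(by ring : r + (k - r + 1) + 1 - (k - r + 1) * t = r + 1 - (k + 1 - r) * (t - 1)),
        max_eq_left (by omega : (0:ℤ) ≤ k + 2)]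
    linear_combination ih + hstep

theorem stmt_6 (r k : ℤ) (hr : 0 ≤ r) (hk : k ≥ r) (n : ℕ) (f1 : ℤ) (hf1 : 0 ≤ f1)
    (t : Fin n → ℤ) (ht : ∀ i, 2 ≤ t i) :
    C2 (k + 2) + f1 * C2 (k + 2 - (r + 1))
      - ∑ i : Fin n, (t i * C2 (k + 2 - (r + 1))
          - bb (t i) r * C2 (k + 2 - Omega (t i) r)
          - aa (t i) r * C2 (k + 2 - (Omega (t i) r + 1)))
    = C2 (k + 2) + f1 * C2 (k + 2 - (r + 1))
      - n * (C2 (k + 2) - C2 (r + 2))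
      + ∑ i : Fin n, ∑ j ∈ Finset.Icc (1 : ℤ) (k - r), max (r + j + 1 - j * t i) 0 := by
  rw [Finset.sum_congr rfl (fun i _ => key (t i) r (ht i) hr k hk)]
  rw [Finset.sum_sub_distrib, Finset.sum_const, Finset.card_univ, Fintype.card_fin,
      nsmul_eq_mul]
  ring
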